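/- Let F : ℝ^{dn} → ℝ ∪ {+∞} be bounded on its domain and suppose each u-subproblem of the ADMM-like algorithm has a global minimizer. Then with η^{(k)} = η^{(0)}σ^k (σ > 1), the sequence u^{(k)} converges, ‖u^{(k+1)} − u^{(k)}‖₂ decreasing exponentially, and consequently (u^{(k)}, v^{(k)}, w^{(k)}) converge to a common limit with (q₁^{(k)}, q₂^{(k)}) → (0,0). -/

import Mathlib

open Filter Topology

/-- Grouped ℓ⁰ semi-norm. -/
noncomputable def l0 {n d : ℕ} (w : Fin n → Fin d → ℝ) : ℝ :=
  Set.ncard {i : Fin n | w i ≠ 0}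

lemma l0_nonneg {n d : ℕ} (w : Fin n → Fin d → ℝ) : 0 ≤ l0 w :=
  Nat.cast_nonneg _

lemma l0_le_card {n d : ℕ} (w : Fin n → Fin d → ℝ) : l0 w ≤ n := by
  have h : {i : Fin n | w i ≠ 0}.ncard ≤ (Set.univ : Set (Fin n)).ncard :=
    Set.ncard_le_ncard (Set.subset_univ _) Set.finite_univ
  have := (Nat.cast_le (α := ℝ)).mpr h
  simpa [l0, Set.ncard_univ] using this

/-- quadratic root bound : t² ≤ p² + q t with everything nonneg gives t ≤ p + q. -/
lemma quad_bound {t p q : ℝ} (ht : 0 ≤ t) (hp : 0 ≤ p) (hq : 0 ≤ q)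
    (h : t ^ 2 ≤ p ^ 2 + q * t) : t ≤ p + q := by
  by_contra hc
  push_neg at hc
  nlinarith

lemma step_div {t c q e : ℝ} (he : 0 < e) (h : e * t ^ 2 ≤ c + e * t * q) :
    t ^ 2 ≤ c / e + t * q := by
  rw [div_add' _ _ _ he.ne', le_div_iff₀ he]
  nlinarith

lemma sq_step {t c q s x : ℝ} (h1 : t ^ 2 ≤ c + t * q) (h2 : c ≤ s ^ 2 * x ^ 2) :
    t ^ 2 ≤ (s * x) ^ 2 + q * t := by nlinarith

/-- from x² ≤ y² with x, y nonneg conclude x ≤ y. -/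
lemma le_of_sq_le_sq' {x y : ℝ} (hx : 0 ≤ x) (hy : 0 ≤ y) (h : x ^ 2 ≤ y ^ 2) : x ≤ y := by
  nlinarith

set_option maxHeartbeats 1000000 in
/-- Convergence of the ADMM-like algorithm for F bounded on its domain,
assuming the u-subproblems have global minimizers (Theorem 4.2). -/
theorem stmt13 {N n d : ℕ}
    (F : EuclideanSpace ℝ (Fin N) → EReal)
    (hproper : ∃ x, F x ≠ ⊤)
    (hbound : ∃ B : ℝ, ∀ x, F x ≠ ⊤ → (((-B : ℝ) : EReal) ≤ F x ∧ F x ≤ ((B : ℝ) : EReal)))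
    (D1 D2 : EuclideanSpace ℝ (Fin N) →ₗ[ℝ] (Fin n → Fin d → ℝ))
    (lam η₀ σ : ℝ) (hlam : 0 < lam) (hη₀ : 0 < η₀) (hσ : 1 < σ)
    (η : ℕ → ℝ) (hη : ∀ k, η k = η₀ * σ ^ k)
    (u v w q1 q2 : ℕ → EuclideanSpace ℝ (Fin N))
    (hu : ∀ k, ∀ x : EuclideanSpace ℝ (Fin N),
      F (u (k + 1)) + ((η k / 2 * (‖u (k + 1) - v k + q1 k‖ ^ 2
          + ‖u (k + 1) - w k + q2 k‖ ^ 2) : ℝ) : EReal) ≤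
        F x + ((η k / 2 * (‖x - v k + q1 k‖ ^ 2 + ‖x - w k + q2 k‖ ^ 2) : ℝ) : EReal))
    (hv : ∀ k, ∀ x : EuclideanSpace ℝ (Fin N),
      lam * l0 (D1 (v (k + 1))) + η k / 2 * ‖u (k + 1) - v (k + 1) + q1 k‖ ^ 2 ≤
        lam * l0 (D1 x) + η k / 2 * ‖u (k + 1) - x + q1 k‖ ^ 2)
    (hw : ∀ k, ∀ x : EuclideanSpace ℝ (Fin N),
      lam * l0 (D2 (w (k + 1))) + η k / 2 * ‖u (k + 1) - w (k + 1) + q2 k‖ ^ 2 ≤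
        lam * l0 (D2 x) + η k / 2 * ‖u (k + 1) - x + q2 k‖ ^ 2)
    (hq1 : ∀ k, q1 (k + 1) = q1 k + u (k + 1) - v (k + 1))
    (hq2 : ∀ k, q2 (k + 1) = q2 k + u (k + 1) - w (k + 1)) :
    (∃ C r : ℝ, 0 < C ∧ 0 < r ∧ r < 1 ∧ ∀ k, ‖u (k + 1) - u k‖ ≤ C * r ^ k) ∧
    ∃ uh : EuclideanSpace ℝ (Fin N),
      Tendsto u atTop (nhds uh) ∧ Tendsto v atTop (nhds uh) ∧ Tendsto w atTop (nhds uh) ∧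
        Tendsto q1 atTop (nhds 0) ∧ Tendsto q2 atTop (nhds 0) := by
  obtain ⟨x₀, hx₀⟩ := hproper
  obtain ⟨B, hB⟩ := hbound
  have hσ0 : (0:ℝ) < σ := lt_trans one_pos hσ
  have hηpos : ∀ k, 0 < η k := fun k => (hη k) ▸ mul_pos hη₀ (pow_pos hσ0 k)
  -- the geometric ratio
  have hsqσ : 1 < Real.sqrt σ := by
    have : Real.sqrt 1 < Real.sqrt σ := Real.sqrt_lt_sqrt (by norm_num) hσ
    simpa using this
  set r : ℝ := (Real.sqrt σ)⁻¹ with hrdef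
  have hr0 : 0 < r := inv_pos.mpr (lt_trans one_pos hsqσ)
  have hr1 : r < 1 := inv_lt_one_of_one_lt₀ hsqσ
  have hr2 : r ^ 2 = σ⁻¹ := by
    rw [hrdef, inv_pow, Real.sq_sqrt hσ0.le]
  -- bound on q
  set M : ℝ := Real.sqrt (2 * (lam * n) / η₀) with hMdef
  have hM0 : 0 ≤ M := Real.sqrt_nonneg _
  have hM2 : M ^ 2 = 2 * (lam * n) / η₀ :=
    Real.sq_sqrt (by positivity)
  have hq1norm : ∀ k, ‖q1 (k + 1)‖ ≤ M * r ^ k := by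
    intro k
    have h := hv k (u (k + 1) + q1 k)
    have e1 : u (k + 1) - (u (k + 1) + q1 k) + q1 k = 0 := by abel
    have e2 : u (k + 1) - v (k + 1) + q1 k = q1 (k + 1) := by rw [hq1 k]; abel
    rw [e1, e2, norm_zero] at h
    have hl1 : 0 ≤ lam * l0 (D1 (v (k + 1))) := mul_nonneg hlam.le (l0_nonneg _)
    have hl2 : lam * l0 (D1 (u (k + 1) + q1 k)) ≤ lam * n :=
      mul_le_mul_of_nonneg_left (l0_le_card _) hlam.le
    have hsq : ‖q1 (k + 1)‖ ^ 2 ≤ 2 * (lam * n) / η k := by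
      rw [le_div_iff₀ (hηpos k)]
      nlinarith [hηpos k]
    have hrhs : 2 * (lam * n) / η k = (M * r ^ k) ^ 2 := by
      rw [mul_pow, hM2, ← pow_mul, mul_comm k 2, pow_mul, hr2, hη k, inv_pow]
      field_simp
    exact le_of_sq_le_sq' (norm_nonneg _) (by positivity) (hrhs ▸ hsq)
  have hq2norm : ∀ k, ‖q2 (k + 1)‖ ≤ M * r ^ k := by
    intro k
    have h := hw k (u (k + 1) + q2 k)
    have e1 : u (k + 1) - (u (k + 1) + q2 k) + q2 k = 0 := by abel
    have e2 : u (k + 1) - w (k + 1) + q2 k = q2 (k + 1) := by rw [hq2 k]; abel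
    rw [e1, e2, norm_zero] at h
    have hl1 : 0 ≤ lam * l0 (D2 (w (k + 1))) := mul_nonneg hlam.le (l0_nonneg _)
    have hl2 : lam * l0 (D2 (u (k + 1) + q2 k)) ≤ lam * n :=
      mul_le_mul_of_nonneg_left (l0_le_card _) hlam.le
    have hsq : ‖q2 (k + 1)‖ ^ 2 ≤ 2 * (lam * n) / η k := by
      rw [le_div_iff₀ (hηpos k)]
      nlinarith [hηpos k]
    have hrhs : 2 * (lam * n) / η k = (M * r ^ k) ^ 2 := by
      rw [mul_pow, hM2, ← pow_mul, mul_comm k 2, pow_mul, hr2, hη k, inv_pow]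
      field_simp
    exact le_of_sq_le_sq' (norm_nonneg _) (by positivity) (hrhs ▸ hsq)
  -- F (u (k+1)) is finite
  have hFbot : ∀ x, F x ≠ ⊤ → F x ≠ ⊥ := by
    intro x hx hbot
    have := (hB x hx).1
    rw [hbot] at this
    exact absurd (le_bot_iff.mp this) (EReal.coe_ne_bot _)
  have hFtop : ∀ k, F (u (k + 1)) ≠ ⊤ := by
    intro k htop
    have h := hu k x₀
    rw [htop, EReal.top_add_coe] at h
    have hx₀B := (hB x₀ hx₀).2
    have : (⊤ : EReal) ≤ ((B : ℝ) : EReal) +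
        ((η k / 2 * (‖x₀ - v k + q1 k‖ ^ 2 + ‖x₀ - w k + q2 k‖ ^ 2) : ℝ) : EReal) :=
      le_trans h (add_le_add hx₀B (le_refl _))
    rw [← EReal.coe_add] at this
    exact EReal.coe_ne_top _ (top_le_iff.mp this)
  have hB0 : 0 ≤ B := by
    have h1 := (hB x₀ hx₀).1
    have h2 := (hB x₀ hx₀).2
    have := le_trans h1 h2
    rw [EReal.coe_le_coe_iff] at this
    linarith
  -- real values of F along the iterates
  set f : ℕ → ℝ := fun k => (F (u k)).toReal with hfdef
  have hfcoe : ∀ k, F (u (k + 1)) = ((f (k + 1) : ℝ) : EReal) :=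
    fun k => (EReal.coe_toReal (hFtop k) (hFbot _ (hFtop k))).symm
  have hfB : ∀ k, -B ≤ f (k + 1) ∧ f (k + 1) ≤ B := by
    intro k
    have h := hB (u (k + 1)) (hFtop k)
    rw [hfcoe k, EReal.coe_le_coe_iff, EReal.coe_le_coe_iff] at h
    exact h
  -- the main real inequality at step m = k+2
  set K : ℝ := Real.sqrt (2 * B / η₀) + 6 * M with hKdef
  have hK0 : 0 ≤ K := by positivity
  have hstep : ∀ k : ℕ, ‖u (k + 3) - u (k + 2)‖ ≤ K * r ^ k := by
    intro k
    show ‖u (k + 2 + 1) - u (k + 2)‖ ≤ K * r ^ k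
    obtain ⟨dd, hdd⟩ : ∃ x : EuclideanSpace ℝ (Fin N), u (k + 2 + 1) - u (k + 2) = x := ⟨_, rfl⟩
    obtain ⟨a, ha⟩ : ∃ x : EuclideanSpace ℝ (Fin N), u (k + 2) - v (k + 2) + q1 (k + 2) = x := ⟨_, rfl⟩
    obtain ⟨b, hb⟩ : ∃ x : EuclideanSpace ℝ (Fin N), u (k + 2) - w (k + 2) + q2 (k + 2) = x := ⟨_, rfl⟩
    rw [hdd]
    -- extract real inequality from the u-subproblem optimality
    have h := hu (k + 2) (u (k + 2))
    have hf1 : F (u (k + 2 + 1)) = ((f (k + 2 + 1) : ℝ) : EReal) := hfcoe (k + 2)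
    have hf2 : F (u (k + 2)) = ((f (k + 2) : ℝ) : EReal) := hfcoe (k + 1)
    rw [hf1, hf2, ← EReal.coe_add, ← EReal.coe_add, EReal.coe_le_coe_iff] at h
    have ea : u (k + 2 + 1) - v (k + 2) + q1 (k + 2) = dd + a := by rw [← hdd, ← ha]; abel
    have eb : u (k + 2 + 1) - w (k + 2) + q2 (k + 2) = dd + b := by rw [← hdd, ← hb]; abel
    have ena : ‖dd + a‖ ^ 2 = ‖dd‖ ^ 2 + 2 * inner ℝ dd a + ‖a‖ ^ 2 := norm_add_sq_real dd a
    have enb : ‖dd + b‖ ^ 2 = ‖dd‖ ^ 2 + 2 * inner ℝ dd b + ‖b‖ ^ 2 := norm_add_sq_real dd b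
    rw [ha, hb, ea, eb, ena, enb] at h
    have hfd : f (k + 2) - f (k + 2 + 1) ≤ 2 * B := by
      have h1 : f (k + 2) ≤ B := (hfB (k + 1)).2
      have h2 : -B ≤ f (k + 2 + 1) := (hfB (k + 2)).1
      linarith
    have hia : -(‖dd‖ * ‖a‖) ≤ inner ℝ dd a := neg_le_of_abs_le (abs_real_inner_le_norm dd a)
    have hib : -(‖dd‖ * ‖b‖) ≤ inner ℝ dd b := neg_le_of_abs_le (abs_real_inner_le_norm dd b)
    -- bounds on ‖a‖, ‖b‖
    have hq1e : q1 (k + 2) = q1 (k + 1) + u (k + 2) - v (k + 2) := hq1 (k + 1)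
    have hq2e : q2 (k + 2) = q2 (k + 1) + u (k + 2) - w (k + 2) := hq2 (k + 1)
    have huv1 : u (k + 2) - v (k + 2) = q1 (k + 2) - q1 (k + 1) := by rw [hq1e]; abel
    have huv2 : u (k + 2) - w (k + 2) = q2 (k + 2) - q2 (k + 1) := by rw [hq2e]; abel
    have hva : a = q1 (k + 2) - q1 (k + 1) + q1 (k + 2) := by rw [← ha, huv1]
    have hvb : b = q2 (k + 2) - q2 (k + 1) + q2 (k + 2) := by rw [← hb, huv2]
    have hrk : r ^ (k + 1) ≤ r ^ k :=
      pow_le_pow_of_le_one hr0.le hr1.le (Nat.le_succ k)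
    have hq1n : ‖q1 (k + 2)‖ ≤ M * r ^ (k + 1) := hq1norm (k + 1)
    have hq2n : ‖q2 (k + 2)‖ ≤ M * r ^ (k + 1) := hq2norm (k + 1)
    have hrknn : 0 ≤ r ^ k := by positivity
    have hna : ‖a‖ ≤ 3 * M * r ^ k := by
      rw [hva]
      calc ‖q1 (k + 2) - q1 (k + 1) + q1 (k + 2)‖
          ≤ ‖q1 (k + 2) - q1 (k + 1)‖ + ‖q1 (k + 2)‖ := norm_add_le _ _
        _ ≤ (‖q1 (k + 2)‖ + ‖q1 (k + 1)‖) + ‖q1 (k + 2)‖ := by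
            linarith [norm_sub_le (q1 (k + 2)) (q1 (k + 1))]
        _ ≤ 3 * M * r ^ k := by
            nlinarith [hq1norm k, hq1n, mul_le_mul_of_nonneg_left hrk hM0]
    have hnb : ‖b‖ ≤ 3 * M * r ^ k := by
      rw [hvb]
      calc ‖q2 (k + 2) - q2 (k + 1) + q2 (k + 2)‖
          ≤ ‖q2 (k + 2) - q2 (k + 1)‖ + ‖q2 (k + 2)‖ := norm_add_le _ _
        _ ≤ (‖q2 (k + 2)‖ + ‖q2 (k + 1)‖) + ‖q2 (k + 2)‖ := by
            linarith [norm_sub_le (q2 (k + 2)) (q2 (k + 1))]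
        _ ≤ 3 * M * r ^ k := by
            nlinarith [hq2norm k, hq2n, mul_le_mul_of_nonneg_left hrk hM0]
    -- combine: η (k+2) ‖dd‖² ≤ 2B + η (k+2) ‖dd‖ (6 M r^k)
    have hηm : 0 < η (k + 2) := hηpos (k + 2)
    have hd0 : (0:ℝ) ≤ ‖dd‖ := norm_nonneg _
    have hkey : η (k + 2) * ‖dd‖ ^ 2 ≤ 2 * B + η (k + 2) * ‖dd‖ * (6 * M * r ^ k) := by
      have h1 : η (k + 2) * ‖dd‖ ^ 2 + η (k + 2) * (inner ℝ dd a + inner ℝ dd b) ≤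
          f (k + 2) - f (k + 2 + 1) := by nlinarith [h]
      have h2 : -(‖dd‖ * (‖a‖ + ‖b‖)) ≤ (inner ℝ dd a + inner ℝ dd b : ℝ) := by linarith [hia, hib]
      have h3 : ‖a‖ + ‖b‖ ≤ 6 * M * r ^ k := by linarith [hna, hnb]
      have hint1 := mul_le_mul_of_nonneg_left h3 (mul_nonneg hηm.le hd0)
      have hint2 := mul_le_mul_of_nonneg_left h2 hηm.le
      have hexp : η (k + 2) * -(‖dd‖ * (‖a‖ + ‖b‖)) =
          -(η (k + 2) * ‖dd‖ * (‖a‖ + ‖b‖)) := by ring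
      rw [hexp] at hint2
      linarith [hfd, h1, hint1, hint2,
        mul_le_mul_of_nonneg_left (le_refl (inner ℝ dd a + inner ℝ dd b : ℝ)) hηm.le]
    -- divide by η (k+2) and solve the quadratic
    have hrr : (r ^ k) ^ 2 = (σ ^ k)⁻¹ := by
      rw [← pow_mul, mul_comm k 2, pow_mul, hr2, inv_pow]
    have h2B : 2 * B / η (k + 2) ≤ 2 * B / η₀ * (r ^ k) ^ 2 := by
      have hle : η₀ * σ ^ k ≤ η (k + 2) := by
        rw [hη (k + 2)]
        exact mul_le_mul_of_nonneg_left (pow_le_pow_right₀ hσ.le (by omega)) hη₀.le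
      have hpos : (0:ℝ) < η₀ * σ ^ k := by positivity
      have := div_le_div_of_nonneg_left (show (0:ℝ) ≤ 2 * B by linarith) hpos hle
      have heq : 2 * B / η₀ * (r ^ k) ^ 2 = 2 * B / (η₀ * σ ^ k) := by
        rw [hrr]; field_simp
      rw [heq]; exact this
    have hstep1 : ‖dd‖ ^ 2 ≤ 2 * B / η (k + 2) + ‖dd‖ * (6 * M * r ^ k) :=
      step_div hηm hkey
    have hs : (Real.sqrt (2 * B / η₀)) ^ 2 = 2 * B / η₀ :=
      Real.sq_sqrt (by positivity)
    have h2B' : 2 * B / η (k + 2) ≤ Real.sqrt (2 * B / η₀) ^ 2 * (r ^ k) ^ 2 := by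
      rw [hs]; exact h2B
    have hdiv : ‖dd‖ ^ 2 ≤ (Real.sqrt (2 * B / η₀) * r ^ k) ^ 2 + (6 * M * r ^ k) * ‖dd‖ :=
      sq_step hstep1 h2B' 
    have := quad_bound hd0 (show (0:ℝ) ≤ Real.sqrt (2 * B / η₀) * r ^ k by positivity)
      (show (0:ℝ) ≤ 6 * M * r ^ k by positivity) hdiv
    calc ‖dd‖ ≤ Real.sqrt (2 * B / η₀) * r ^ k + 6 * M * r ^ k := this
      _ = K * r ^ k := by rw [hKdef]; ring
  -- global geometric bound
  set C : ℝ := K / r ^ 2 + ‖u 1 - u 0‖ + ‖u 2 - u 1‖ / r + 1 with hCdef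
  have hC0 : 0 < C := by positivity
  have hgeom : ∀ k, ‖u (k + 1) - u k‖ ≤ C * r ^ k := by
    intro k
    match k with
    | 0 =>
      simp only [pow_zero, mul_one]
      have : (0:ℝ) ≤ K / r ^ 2 := by positivity
      have : (0:ℝ) ≤ ‖u 2 - u 1‖ / r := by positivity
      rw [hCdef]; linarith
    | 1 =>
      have h1 : ‖u 2 - u 1‖ / r ≤ C := by
        have : (0:ℝ) ≤ K / r ^ 2 := by positivity
        rw [hCdef]; linarith [norm_nonneg (u 1 - u 0)]
      have := mul_le_mul_of_nonneg_right h1 hr0.le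
      rw [div_mul_cancel₀ _ hr0.ne'] at this
      simpa [pow_one] using this
    | (k + 2) =>
      have h1 : K * r ^ k = (K / r ^ 2) * r ^ (k + 2) := by
        field_simp; ring
      have h2 : K / r ^ 2 ≤ C := by
        rw [hCdef]
        have : (0:ℝ) ≤ ‖u 2 - u 1‖ / r := by positivity
        linarith [norm_nonneg (u 1 - u 0)]
      calc ‖u (k + 2 + 1) - u (k + 2)‖ ≤ K * r ^ k := hstep k
        _ = (K / r ^ 2) * r ^ (k + 2) := h1
        _ ≤ C * r ^ (k + 2) := mul_le_mul_of_nonneg_right h2 (by positivity)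
  refine ⟨⟨C, r, hC0, hr0, hr1, hgeom⟩, ?_⟩
  -- convergence
  have hcauchy : CauchySeq u := by
    apply cauchySeq_of_le_geometric r C hr1
    intro k
    rw [dist_eq_norm, norm_sub_rev]
    exact hgeom k
  obtain ⟨uh, huh⟩ := cauchySeq_tendsto_of_complete hcauchy
  have hMr0 : Tendsto (fun k : ℕ => M * r ^ k) atTop (nhds 0) := by
    have := (tendsto_pow_atTop_nhds_zero_of_lt_one hr0.le hr1).const_mul M
    simpa using this
  have hq1t' : Tendsto (fun k => q1 (k + 1)) atTop (nhds 0) :=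
    squeeze_zero_norm hq1norm hMr0
  have hq2t' : Tendsto (fun k => q2 (k + 1)) atTop (nhds 0) :=
    squeeze_zero_norm hq2norm hMr0
  have hq1t : Tendsto q1 atTop (nhds 0) := (tendsto_add_atTop_iff_nat 1).mp hq1t'
  have hq2t : Tendsto q2 atTop (nhds 0) := (tendsto_add_atTop_iff_nat 1).mp hq2t'
  have hut' : Tendsto (fun k => u (k + 1)) atTop (nhds uh) :=
    (tendsto_add_atTop_iff_nat 1).mpr huh
  have hvt : Tendsto v atTop (nhds uh) := by
    rw [← tendsto_add_atTop_iff_nat 1]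
    have hve : ∀ k, v (k + 1) = u (k + 1) + q1 k - q1 (k + 1) := by
      intro k
      have := hq1 k
      have : v (k + 1) = q1 k + u (k + 1) - q1 (k + 1) := by rw [this]; abel
      rw [this]; abel
    have : Tendsto (fun k => u (k + 1) + q1 k - q1 (k + 1)) atTop (nhds (uh + 0 - 0)) :=
      (hut'.add hq1t).sub hq1t'
    simpa [← hve] using this
  have hwt : Tendsto w atTop (nhds uh) := by
    rw [← tendsto_add_atTop_iff_nat 1]
    have hwe : ∀ k, w (k + 1) = u (k + 1) + q2 k - q2 (k + 1) := by
      intro k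
      have := hq2 k
      have : w (k + 1) = q2 k + u (k + 1) - q2 (k + 1) := by rw [this]; abel
      rw [this]; abel
    have : Tendsto (fun k => u (k + 1) + q2 k - q2 (k + 1)) atTop (nhds (uh + 0 - 0)) :=
      (hut'.add hq2t).sub hq2t'
    simpa [← hwe] using this
  exact ⟨uh, huh, hvt, hwt, hq1t, hq2t⟩
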